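/- Let α > 0 and let x ∈ 𝔈 be such that m_{x,α} exists. If y ∈ 𝔈 satisfies ‖x − y‖ < √(∑_{k=1}^{m_{x,α}} |x_k|²) − α, then m_{y,α} exists and m_{y,α} ≤ m_{x,α}. -/

import Mathlib

noncomputable section

open scoped ENNReal

/-- The ambient Hilbert space `ℓ²` of real square-summable sequences. -/
abbrev ellTwo : Type := lp (fun _ : ℕ => ℝ) 2

/-- Erdős space `𝔈`: the additive subgroup of `ℓ²` consisting of the sequences
all of whose coordinates are rational. -/
def Erdos : AddSubgroup ellTwo where
  carrier := {x | ∀ k, ∃ q : ℚ, (x : ℕ → ℝ) k = (q : ℝ)}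
  add_mem' := by
    intro a b ha hb k
    obtain ⟨p, hp⟩ := ha k
    obtain ⟨q, hq⟩ := hb k
    exact ⟨p + q, by rw [lp.coeFn_add]; simp [hp, hq]⟩
  zero_mem' := fun k => ⟨0, by simp⟩
  neg_mem' := by
    intro a ha k
    obtain ⟨p, hp⟩ := ha k
    exact ⟨-p, by rw [lp.coeFn_neg]; simp [hp]⟩

/-- Erdős space as a type (with the subspace topology and norm inherited from `ℓ²`). -/
abbrev ErdosSpace : Type := ↥Erdos

/-- The coordinates of a point of Erdős space (indexed from `0`, so that the
coordinate `x_k` of the paper is `coords x (k-1)`). -/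
def coords (x : ErdosSpace) : ℕ → ℝ := ((x : ellTwo) : ℕ → ℝ)

/-- `mExists x α` says that `m_{x,α}` exists, i.e. some finite initial sum of squares
of coordinates exceeds `α` (here `m` counts how many initial coordinates are taken). -/
def mExists (x : ErdosSpace) (α : ℝ) : Prop :=
  ∃ m : ℕ, α < Real.sqrt (∑ k ∈ Finset.range m, (coords x k) ^ 2)

/-- `mIndex x α` is the least `m` such that `√(∑_{k<m} x_k²) > α` (and `0` if none exists);
this corresponds to `m_{x,α}` of the paper. -/
def mIndex (x : ErdosSpace) (α : ℝ) : ℕ :=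
  sInf {m : ℕ | α < Real.sqrt (∑ k ∈ Finset.range m, (coords x k) ^ 2)}

/-- The set `A_{α,β}`: those `x` for which either `m_{x,α}` exists and every coordinate
beyond the first `m_{x,α}` ones has absolute value `< β`, or `m_{x,α}` does not exist. -/
def A (α β : ℝ) : Set ErdosSpace :=
  {x | (mExists x α ∧ ∀ l, mIndex x α ≤ l → |coords x l| < β) ∨ ¬mExists x α}


/-- If `m_{x,α}` exists and `‖x - y‖ < √(∑_{k=1}^{m_{x,α}} x_k²) - α`, then `m_{y,α}`
exists and `m_{y,α} ≤ m_{x,α}`. -/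
theorem mIndex_le_of_close (α : ℝ) (hα : 0 < α) (x : ErdosSpace) (hx : mExists x α)
    (y : ErdosSpace)
    (hy : ‖x - y‖ < Real.sqrt (∑ k ∈ Finset.range (mIndex x α), (coords x k) ^ 2) - α) :
    mExists y α ∧ mIndex y α ≤ mIndex x α := by
  set m := mIndex x α with hm
  -- key: the finite partial sums satisfy a reverse triangle inequality
  set X : EuclideanSpace ℝ (Fin m) := WithLp.toLp 2 (fun i : Fin m => coords x i) with hX
  set Y : EuclideanSpace ℝ (Fin m) := WithLp.toLp 2 (fun i : Fin m => coords y i) with hY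
  have normX : ‖X‖ = Real.sqrt (∑ k ∈ Finset.range m, (coords x k) ^ 2) := by
    rw [EuclideanSpace.norm_eq]
    congr 1
    rw [← Fin.sum_univ_eq_sum_range (fun k => (coords x k) ^ 2)]
    exact Finset.sum_congr rfl fun i _ => by simp [hX, sq_abs]
  have normY : ‖Y‖ = Real.sqrt (∑ k ∈ Finset.range m, (coords y k) ^ 2) := by
    rw [EuclideanSpace.norm_eq]
    congr 1
    rw [← Fin.sum_univ_eq_sum_range (fun k => (coords y k) ^ 2)]
    exact Finset.sum_congr rfl fun i _ => by simp [hY, sq_abs]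
  have coordsub : ∀ k, coords (x - y) k = coords x k - coords y k := by
    intro k
    show ((((x - y : ErdosSpace) : ellTwo)) : ℕ → ℝ) k = _
    rw [AddSubgroup.coe_sub, lp.coeFn_sub]
    rfl
  have hsum : ∑ k ∈ Finset.range m, ‖(((x - y : ErdosSpace) : ellTwo)) k‖ ^ 2
      ≤ ‖((x - y : ErdosSpace) : ellTwo)‖ ^ 2 := by
    have htwo : (0:ℝ) < (2 : ℝ≥0∞).toReal := by norm_num
    have hs := lp.sum_rpow_le_norm_rpow htwo ((x - y : ErdosSpace) : ellTwo) (Finset.range m)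
    have h2 : ((2:ℝ≥0∞).toReal) = ((2:ℕ):ℝ) := by norm_num
    rw [h2] at hs
    simpa [Real.rpow_natCast] using hs
  have hXY : ‖X - Y‖ ≤ ‖x - y‖ := by
    have h1 : ‖X - Y‖ ^ 2 ≤ ‖(x - y : ErdosSpace)‖ ^ 2 := by
      rw [EuclideanSpace.norm_eq, Real.sq_sqrt (by positivity)]
      calc ∑ i, ‖(X - Y) i‖ ^ 2
          = ∑ k ∈ Finset.range m, ‖(((x - y : ErdosSpace) : ellTwo)) k‖ ^ 2 := by
            rw [← Fin.sum_univ_eq_sum_range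
              (fun k => ‖(((x - y : ErdosSpace) : ellTwo)) k‖ ^ 2)]
            refine Finset.sum_congr rfl fun i _ => ?_
            have := coordsub i
            simp only [coords] at this
            simp [hX, hY, this, coords]
        _ ≤ ‖((x - y : ErdosSpace) : ellTwo)‖ ^ 2 := hsum
        _ = ‖(x - y : ErdosSpace)‖ ^ 2 := rfl
    nlinarith [norm_nonneg (X - Y), norm_nonneg (x - y : ErdosSpace)]
  have hmem : α < Real.sqrt (∑ k ∈ Finset.range m, (coords x k) ^ 2) := by
    have := Nat.sInf_mem (s := {m : ℕ | α < Real.sqrt (∑ k ∈ Finset.range m, (coords x k) ^ 2)}) hx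
    exact this
  have key : α < Real.sqrt (∑ k ∈ Finset.range m, (coords y k) ^ 2) := by
    have tri : ‖X‖ - ‖Y‖ ≤ ‖X - Y‖ := norm_sub_norm_le X Y
    rw [normX, normY] at tri
    linarith [hXY.trans_lt hy]
  have hEy : mExists y α := ⟨m, key⟩
  exact ⟨hEy, Nat.sInf_le key⟩
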